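/- arXiv:2504.19511 — 2 statements merged into one kernel-verified Lean document; each statement's English description precedes it below -/
import Mathlib

section
/- (Proposition 6, Max-Max scheme as a limit) Fix positive reals a, b, L_1, L_2, γ_th and positive integers K, N, and define G_d = K·N·a/2 and G_c = (a·Γ(a))^{2/a} · b² / (L_1² L_2² · γ_th). Let F(γ̄) = ( Υ(a, √((L_1² L_2² / b²)·(γ_th/γ̄))) / Γ(a) )^{K·N} for γ̄ > 0. Then F(γ̄) · (G_c · γ̄)^{G_d} → 1 as γ̄ → ∞; that is, the outage probability of the Max-Max scheme behaves asymptotically as (G_c · γ̄)^{−G_d} in the high-SNR regime. -/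
open Filter

/-- The lower incomplete Gamma function `Υ(s, x) = ∫_0^x t^(s-1) e^(-t) dt`. -/
noncomputable def lowerIncGamma (s x : ℝ) : ℝ :=
  ∫ t in (0:ℝ)..x, t ^ (s - 1) * Real.exp (-t)

lemma ratio_tendsto (a : ℝ) (ha : 0 < a) :
    Tendsto (fun x => a * lowerIncGamma a x / x ^ a) (nhdsWithin 0 (Set.Ioi 0)) (nhds 1) := by
  apply tendsto_of_tendsto_of_tendsto_of_le_of_le'
    (g := fun x : ℝ => Real.exp (-x)) (h := fun _ : ℝ => (1:ℝ))
  · have : Tendsto (fun x : ℝ => Real.exp (-x)) (nhds 0) (nhds 1) := by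
      have := (Real.continuous_exp.comp continuous_neg).tendsto 0
      simpa [Function.comp_def] using this
    exact this.mono_left nhdsWithin_le_nhds
  · exact tendsto_const_nhds
  · filter_upwards [self_mem_nhdsWithin] with x hx
    have hx : (0:ℝ) < x := hx
    have hxa : (0:ℝ) < x ^ a := Real.rpow_pos_of_pos hx a
    have hint : IntervalIntegrable (fun t : ℝ => t ^ (a-1)) MeasureTheory.volume 0 x :=
      intervalIntegral.intervalIntegrable_rpow' (by linarith)
    have hint2 : IntervalIntegrable (fun t : ℝ => t ^ (a-1) * Real.exp (-t))
        MeasureTheory.volume 0 x :=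
      hint.mul_continuousOn (Continuous.continuousOn (by continuity))
    have hint3 : IntervalIntegrable (fun t : ℝ => Real.exp (-x) * t ^ (a-1))
        MeasureTheory.volume 0 x := hint.const_mul _
    have I1 : (∫ t in (0:ℝ)..x, t ^ (a-1)) = x ^ a / a := by
      rw [integral_rpow (Or.inl (by linarith))]
      simp only [show a - 1 + 1 = a from by ring]
      rw [Real.zero_rpow ha.ne']
      ring
    have hlow : (∫ t in (0:ℝ)..x, Real.exp (-x) * t ^ (a-1)) ≤ lowerIncGamma a x := by
      apply intervalIntegral.integral_mono_on hx.le hint3 hint2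
      intro t ht
      have h1 : Real.exp (-x) ≤ Real.exp (-t) := Real.exp_le_exp.2 (by linarith [ht.2])
      have h2 : (0:ℝ) ≤ t ^ (a-1) := Real.rpow_nonneg ht.1 _
      nlinarith
    have hhigh : lowerIncGamma a x ≤ ∫ t in (0:ℝ)..x, t ^ (a-1) := by
      apply intervalIntegral.integral_mono_on hx.le hint2 hint
      intro t ht
      have h1 : Real.exp (-t) ≤ 1 := Real.exp_le_one_iff.2 (by linarith [ht.1])
      have h2 : (0:ℝ) ≤ t ^ (a-1) := Real.rpow_nonneg ht.1 _
      nlinarith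
    have hlow' : Real.exp (-x) * (x ^ a / a) ≤ lowerIncGamma a x := by
      rwa [intervalIntegral.integral_const_mul, I1] at hlow
    have hxaa : a * (x ^ a / a) = x ^ a := by field_simp
    rw [le_div_iff₀ hxa]
    have h3 := mul_le_mul_of_nonneg_left hlow' ha.le
    rw [show a * (Real.exp (-x) * (x ^ a / a)) = Real.exp (-x) * (a * (x ^ a / a)) from by ring,
      hxaa] at h3
    exact h3
  · filter_upwards [self_mem_nhdsWithin] with x hx
    have hx : (0:ℝ) < x := hx
    have hxa : (0:ℝ) < x ^ a := Real.rpow_pos_of_pos hx a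
    have hint : IntervalIntegrable (fun t : ℝ => t ^ (a-1)) MeasureTheory.volume 0 x :=
      intervalIntegral.intervalIntegrable_rpow' (by linarith)
    have hint2 : IntervalIntegrable (fun t : ℝ => t ^ (a-1) * Real.exp (-t))
        MeasureTheory.volume 0 x :=
      hint.mul_continuousOn (Continuous.continuousOn (by continuity))
    have I1 : (∫ t in (0:ℝ)..x, t ^ (a-1)) = x ^ a / a := by
      rw [integral_rpow (Or.inl (by linarith))]
      simp only [show a - 1 + 1 = a from by ring]
      rw [Real.zero_rpow ha.ne']
      ring
    have hhigh : lowerIncGamma a x ≤ ∫ t in (0:ℝ)..x, t ^ (a-1) := by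
      apply intervalIntegral.integral_mono_on hx.le hint2 hint
      intro t ht
      have h1 : Real.exp (-t) ≤ 1 := Real.exp_le_one_iff.2 (by linarith [ht.1])
      have h2 : (0:ℝ) ≤ t ^ (a-1) := Real.rpow_nonneg ht.1 _
      nlinarith
    have hxaa : a * (x ^ a / a) = x ^ a := by field_simp
    rw [div_le_one hxa]
    rw [I1] at hhigh
    nlinarith [mul_le_mul_of_nonneg_left hhigh ha.le]

/-- Proposition 6, Max-Max scheme: in the high-SNR regime the Max-Max outage
probability behaves as `(G_c γ̄)^{-G_d}` with diversity gain `G_d = KNa/2` and coding gain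
`G_c = (aΓ(a))^{2/a} b² / (L₁²L₂²γ_th)`. -/
theorem stmt_15 (a b L1 L2 γth : ℝ) (K N : ℕ)
    (ha : 0 < a) (hb : 0 < b) (hL1 : 0 < L1) (hL2 : 0 < L2) (hγth : 0 < γth)
    (hK : 0 < K) (hN : 0 < N)
    (Gd Gc : ℝ) (hGd : Gd = K * N * a / 2)
    (hGc : Gc = (a * Real.Gamma a) ^ (2 / a) * b ^ 2 / (L1 ^ 2 * L2 ^ 2 * γth))
    (F : ℝ → ℝ)
    (hF : ∀ γbar : ℝ, 0 < γbar → F γbar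
        = (lowerIncGamma a (Real.sqrt (L1 ^ 2 * L2 ^ 2 / b ^ 2 * (γth / γbar)))
            / Real.Gamma a) ^ (K * N)) :
    Tendsto (fun γbar : ℝ => F γbar * (Gc * γbar) ^ Gd) atTop (nhds 1) := by
  set c : ℝ := L1 ^ 2 * L2 ^ 2 * γth / b ^ 2 with hc_def
  have hc : 0 < c := by positivity
  have hΓ : 0 < Real.Gamma a := Real.Gamma_pos_of_pos ha
  have haΓ : 0 < a * Real.Gamma a := by positivity
  have hxt : Tendsto (fun γ : ℝ => Real.sqrt (c / γ)) atTop (nhdsWithin 0 (Set.Ioi 0)) := by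
    rw [tendsto_nhdsWithin_iff]
    constructor
    · have h1 : Tendsto (fun γ : ℝ => c / γ) atTop (nhds 0) :=
        tendsto_const_nhds.div_atTop tendsto_id
      have := (Real.continuous_sqrt.tendsto 0).comp h1
      simpa [Function.comp_def] using this
    · filter_upwards [eventually_gt_atTop (0:ℝ)] with γ hγ
      exact Real.sqrt_pos.2 (by positivity)
  have hcomp :
      Tendsto (fun γ : ℝ =>
        (a * lowerIncGamma a (Real.sqrt (c / γ)) / Real.sqrt (c / γ) ^ a) ^ (K * N))
        atTop (nhds 1) := by
    have := ((ratio_tendsto a ha).comp hxt).pow (K * N)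
    simpa using this
  refine Tendsto.congr' ?_ hcomp
  filter_upwards [eventually_gt_atTop (0:ℝ)] with γ hγ
  have harg : L1 ^ 2 * L2 ^ 2 / b ^ 2 * (γth / γ) = c / γ := by
    rw [hc_def]; field_simp
  have hcγ : 0 < c / γ := by positivity
  set x : ℝ := Real.sqrt (c / γ) with hx_def
  have hx : 0 < x := Real.sqrt_pos.2 hcγ
  have hxa : 0 < x ^ a := Real.rpow_pos_of_pos hx a
  have hxa_eq : x ^ a = (c / γ) ^ (a / 2) := by
    rw [hx_def, Real.sqrt_eq_rpow, ← Real.rpow_mul hcγ.le,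
      show (1:ℝ)/2 * a = a/2 from by ring]
  have h1 : Gc * γ = (a * Real.Gamma a) ^ (2/a) * (γ / c) := by
    rw [hGc, hc_def]; field_simp
  have hA : (0:ℝ) < (a * Real.Gamma a) ^ (2/a) := Real.rpow_pos_of_pos haΓ _
  have h2 : ((a * Real.Gamma a) ^ (2/a) : ℝ) ^ Gd = (a * Real.Gamma a) ^ (K * N) := by
    rw [← Real.rpow_mul haΓ.le, show (2/a) * Gd = ((K*N : ℕ) : ℝ) from by
      rw [hGd]; push_cast; field_simp, Real.rpow_natCast]
  have h3 : (γ / c) ^ Gd = ((x ^ a)⁻¹) ^ (K * N) := by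
    have e1 : (x ^ a)⁻¹ = (γ / c) ^ (a/2) := by
      rw [hxa_eq, ← Real.inv_rpow hcγ.le, inv_div]
    rw [e1, ← Real.rpow_natCast ((γ/c) ^ (a/2)) (K*N), ← Real.rpow_mul (by positivity),
      show a/2 * ((K*N : ℕ) : ℝ) = Gd from by rw [hGd]; push_cast; ring]
  have hFγ := hF γ hγ
  rw [harg] at hFγ
  rw [h1, Real.mul_rpow hA.le (by positivity), h2, h3, hFγ, ← hx_def]
  rw [← mul_pow, ← mul_pow]
  congr 1
  field_simp
end

section
/- (Proposition 6, Max-Sum scheme as a limit) Fix positive reals a, b, L_1, L_2, γ_th and positive integers K, N, and define G_d = K·N·a/2 and G_c = (K·a·Γ(K·a))^{2/(K·a)} · b² / (K·L_1² L_2² · γ_th). Let F(γ̄) = ( Υ(K·a, √(K·(L_1² L_2² / b²)·(γ_th/γ̄))) / Γ(K·a) )^{N} for γ̄ > 0. Then F(γ̄) · (G_c · γ̄)^{G_d} → 1 as γ̄ → ∞; that is, the outage probability of the Max-Sum scheme behaves asymptotically as (G_c · γ̄)^{−G_d} in the high-SNR regime. -/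
open Filter intervalIntegral

lemma lig_lim (s : ℝ) (hs : 0 < s) :
    Tendsto (fun x => lowerIncGamma s x / x ^ s) (nhdsWithin 0 (Set.Ioi 0)) (nhds (1/s)) := by
  have hlim : Tendsto (fun x : ℝ => Real.exp (-x) / s) (nhdsWithin 0 (Set.Ioi 0)) (nhds (1/s)) := by
    have h := ((Real.continuous_exp.comp continuous_neg).div_const s).tendsto 0
    simp only [Function.comp, neg_zero, Real.exp_zero] at h
    exact h.mono_left nhdsWithin_le_nhds
  apply tendsto_of_tendsto_of_tendsto_of_le_of_le' hlim tendsto_const_nhds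
  · filter_upwards [self_mem_nhdsWithin] with x (hx : 0 < x)
    have hxs : 0 < x ^ s := Real.rpow_pos_of_pos hx s
    have hint1 : IntervalIntegrable (fun t : ℝ => t ^ (s-1)) MeasureTheory.volume 0 x :=
      intervalIntegral.intervalIntegrable_rpow' (by linarith)
    have hint2 : IntervalIntegrable (fun t : ℝ => t ^ (s-1) * Real.exp (-t))
        MeasureTheory.volume 0 x :=
      hint1.mul_continuousOn (Real.continuous_exp.comp continuous_neg).continuousOn
    have hrpow : (∫ t in (0:ℝ)..x, t ^ (s-1)) = x ^ s / s := by
      rw [integral_rpow (Or.inl (by linarith))]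
      rw [Real.zero_rpow (by linarith), sub_add_cancel]
      ring
    have hle : lowerIncGamma s x ≥ Real.exp (-x) * (x ^ s / s) := by
      rw [← hrpow, ← intervalIntegral.integral_const_mul]
      apply intervalIntegral.integral_mono_on hx.le (hint1.const_mul _) hint2
      intro t ht
      rw [Set.mem_Icc] at ht
      have h1 : (0:ℝ) ≤ t ^ (s-1) := Real.rpow_nonneg ht.1 _
      have h2 : Real.exp (-x) ≤ Real.exp (-t) := Real.exp_le_exp.2 (by linarith [ht.2])
      calc Real.exp (-x) * t ^ (s-1) ≤ Real.exp (-t) * t ^ (s-1) := by nlinarith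
        _ = t ^ (s-1) * Real.exp (-t) := mul_comm _ _
    have key : Real.exp (-x) * x ^ s ≤ lowerIncGamma s x * s := by
      have h := mul_le_mul_of_nonneg_right hle hs.le
      calc Real.exp (-x) * x ^ s = Real.exp (-x) * (x ^ s / s) * s := by field_simp
        _ ≤ _ := h
    rw [div_le_div_iff₀ hs hxs]
    linarith
  · filter_upwards [self_mem_nhdsWithin] with x (hx : 0 < x)
    have hxs : 0 < x ^ s := Real.rpow_pos_of_pos hx s
    have hint1 : IntervalIntegrable (fun t : ℝ => t ^ (s-1)) MeasureTheory.volume 0 x :=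
      intervalIntegral.intervalIntegrable_rpow' (by linarith)
    have hint2 : IntervalIntegrable (fun t : ℝ => t ^ (s-1) * Real.exp (-t))
        MeasureTheory.volume 0 x :=
      hint1.mul_continuousOn (Real.continuous_exp.comp continuous_neg).continuousOn
    have hrpow : (∫ t in (0:ℝ)..x, t ^ (s-1)) = x ^ s / s := by
      rw [integral_rpow (Or.inl (by linarith))]
      rw [Real.zero_rpow (by linarith), sub_add_cancel]
      ring
    have hub : lowerIncGamma s x ≤ x ^ s / s := by
      rw [← hrpow]
      apply intervalIntegral.integral_mono_on hx.le hint2 hint1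
      intro t ht
      rw [Set.mem_Icc] at ht
      have h1 : (0:ℝ) ≤ t ^ (s-1) := Real.rpow_nonneg ht.1 _
      have h2 : Real.exp (-t) ≤ 1 := Real.exp_le_one_iff.2 (by linarith [ht.1])
      nlinarith
    have key : lowerIncGamma s x * s ≤ x ^ s := by
      have h := mul_le_mul_of_nonneg_right hub hs.le
      calc lowerIncGamma s x * s ≤ x ^ s / s * s := h
        _ = x ^ s := by field_simp
    rw [div_le_div_iff₀ hxs hs]
    linarith

/-- Proposition 6, Max-Sum scheme: in the high-SNR regime the Max-Sum outage
probability behaves as `(G_c γ̄)^{-G_d}` with diversity gain `G_d = KNa/2` and coding gain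
`G_c = (KaΓ(Ka))^{2/(Ka)} b² / (K L₁²L₂²γ_th)`. -/
theorem stmt_16 (a b L1 L2 γth : ℝ) (K N : ℕ)
    (ha : 0 < a) (hb : 0 < b) (hL1 : 0 < L1) (hL2 : 0 < L2) (hγth : 0 < γth)
    (hK : 0 < K) (hN : 0 < N)
    (Gd Gc : ℝ) (hGd : Gd = K * N * a / 2)
    (hGc : Gc = ((K : ℝ) * a * Real.Gamma ((K : ℝ) * a)) ^ (2 / ((K : ℝ) * a)) * b ^ 2
        / ((K : ℝ) * L1 ^ 2 * L2 ^ 2 * γth))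
    (F : ℝ → ℝ)
    (hF : ∀ γbar : ℝ, 0 < γbar → F γbar
        = (lowerIncGamma ((K : ℝ) * a)
              (Real.sqrt ((K : ℝ) * (L1 ^ 2 * L2 ^ 2 / b ^ 2) * (γth / γbar)))
            / Real.Gamma ((K : ℝ) * a)) ^ N) :
    Tendsto (fun γbar : ℝ => F γbar * (Gc * γbar) ^ Gd) atTop (nhds 1) := by
  set s : ℝ := (K : ℝ) * a with hs_def
  have hKpos : (0:ℝ) < K := by exact_mod_cast hK
  have hs : 0 < s := by positivity
  set Γs : ℝ := Real.Gamma s with hΓs_def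
  have hΓs : 0 < Γs := Real.Gamma_pos_of_pos hs
  set c : ℝ := (K : ℝ) * (L1 ^ 2 * L2 ^ 2 / b ^ 2) * γth with hc_def
  have hc : 0 < c := by positivity
  have hGcpos : 0 < Gc := by rw [hGc]; positivity
  have hsG : 0 < s * Γs := by positivity
  have hcGc : c * Gc = (s * Γs) ^ ((2:ℝ) / s) := by
    rw [hGc, hc_def]
    field_simp
  have h2 : (c * Gc) ^ (s / 2) = s * Γs := by
    rw [hcGc, ← Real.rpow_mul hsG.le,
      show (2:ℝ) / s * (s / 2) = 1 by field_simp, Real.rpow_one]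
  -- the inner function tends to 1
  have hx : Tendsto (fun γbar : ℝ => Real.sqrt (c / γbar)) atTop
      (nhdsWithin 0 (Set.Ioi 0)) := by
    rw [tendsto_nhdsWithin_iff]
    constructor
    · have h0 : Tendsto (fun γbar : ℝ => c / γbar) atTop (nhds 0) :=
        tendsto_const_nhds.div_atTop tendsto_id
      have := (Real.continuous_sqrt.tendsto 0).comp h0
      simpa [Function.comp_def] using this
    · filter_upwards [eventually_gt_atTop (0:ℝ)] with γbar hγ
      exact Real.sqrt_pos.2 (div_pos hc hγ)
  have h1 : Tendsto (fun γbar : ℝ =>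
      lowerIncGamma s (Real.sqrt (c / γbar)) / (Real.sqrt (c / γbar)) ^ s)
      atTop (nhds (1 / s)) := (lig_lim s hs).comp hx
  have hg : Tendsto (fun γbar : ℝ =>
      lowerIncGamma s (Real.sqrt (c / γbar)) / Γs * (Gc * γbar) ^ (s / 2))
      atTop (nhds 1) := by
    have hmul := h1.mul_const s
    rw [one_div, inv_mul_cancel₀ hs.ne'] at hmul
    apply hmul.congr'
    filter_upwards [eventually_gt_atTop (0:ℝ)] with γbar hγ
    have hy : 0 < c / γbar := div_pos hc hγ
    have hx0 : 0 < Real.sqrt (c / γbar) := Real.sqrt_pos.2 hy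
    have hxs : (Real.sqrt (c / γbar)) ^ s = (c / γbar) ^ (s / 2) := by
      rw [Real.sqrt_eq_rpow, ← Real.rpow_mul hy.le, show (1:ℝ)/2 * s = s/2 by ring]
    have key : (Real.sqrt (c / γbar)) ^ s * (Gc * γbar) ^ (s / 2) = s * Γs := by
      rw [hxs, ← Real.mul_rpow hy.le (by positivity),
        show c / γbar * (Gc * γbar) = c * Gc by field_simp]
      exact h2
    have hxsne : (Real.sqrt (c / γbar)) ^ s ≠ 0 := (Real.rpow_pos_of_pos hx0 s).ne'
    have hB : (Gc * γbar) ^ (s / 2) = s * Γs / (Real.sqrt (c / γbar)) ^ s := by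
      rw [← key]; field_simp
    rw [hB]
    field_simp
  -- conclude
  have hpow := hg.pow N
  rw [one_pow] at hpow
  apply hpow.congr'
  filter_upwards [eventually_gt_atTop (0:ℝ)] with γbar hγ
  rw [hF γbar hγ,
    show (K : ℝ) * (L1 ^ 2 * L2 ^ 2 / b ^ 2) * (γth / γbar) = c / γbar by
      rw [hc_def]; ring,
    show Gd = s / 2 * (N : ℝ) by rw [hGd, hs_def]; push_cast; ring,
    Real.rpow_mul (by positivity), Real.rpow_natCast, ← mul_pow]
end
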